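/- Let G be a finite group and ρ : G → GL_n(ℝ) an absolutely irreducible real representation (i.e. the ℝ-span of {ρ(g) : g ∈ G} is all of ℝ^{n×n}) with n even. Then the ℚ-span of the set {ρ(g) − ρ(g⁻¹) : g ∈ G} inside ℝ^{n×n} contains an invertible matrix; i.e. there exist g₁,…,g_m ∈ G and rational numbers a₁,…,a_m such that the matrix Σᵢ aᵢ·(ρ(gᵢ) − ρ(gᵢ⁻¹)) is invertible. -/

import Mathlib

open Matrix

/-- The real span of a set of matrices is contained in the closure of its rational span. -/
lemma real_span_subset_closure_rat_span {n : ℕ} (S : Set (Matrix (Fin n) (Fin n) ℝ)) :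
    (Submodule.span ℝ S : Set (Matrix (Fin n) (Fin n) ℝ)) ⊆
      closure (Submodule.span ℚ S : Set (Matrix (Fin n) (Fin n) ℝ)) := by
  set A := Submodule.span ℚ S with hA
  have hsmul : ∀ (r : ℝ), ∀ x ∈ closure (A : Set (Matrix (Fin n) (Fin n) ℝ)),
      r • x ∈ closure (A : Set (Matrix (Fin n) (Fin n) ℝ)) := by
    intro r x hx
    have h1 : Set.MapsTo (fun y => r • y) (A : Set (Matrix (Fin n) (Fin n) ℝ))
        (closure (A : Set (Matrix (Fin n) (Fin n) ℝ))) := ?_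
    · have h2 := map_mem_closure (continuous_const_smul r) hx h1
      rwa [closure_closure] at h2
    intro a ha
    have hr : r ∈ closure (Set.range ((↑) : ℚ → ℝ)) := Rat.denseRange_cast r
    refine map_mem_closure (f := fun t : ℝ => t • a)
      (continuous_id.smul continuous_const) hr ?_
    rintro _ ⟨q, rfl⟩
    show (q : ℝ) • a ∈ (A : Set (Matrix (Fin n) (Fin n) ℝ))
    rw [Rat.cast_smul_eq_qsmul]
    exact A.smul_mem q ha
  let N : Submodule ℝ (Matrix (Fin n) (Fin n) ℝ) :=
    { carrier := closure (A : Set (Matrix (Fin n) (Fin n) ℝ))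
      add_mem' := fun hx hy => map_mem_closure₂ continuous_add hx hy
        (fun _ hx' _ hy' => A.add_mem hx' hy')
      zero_mem' := subset_closure A.zero_mem
      smul_mem' := fun r x hx => hsmul r x hx }
  have hle : Submodule.span ℝ S ≤ N :=
    Submodule.span_le.mpr (fun x hx => subset_closure (Submodule.subset_span hx))
  exact fun x hx => hle hx

/-- Let `G` be a finite group and `ρ : G → GL_n(ℝ)` an absolutely irreducible real
representation with `n` even.  Then the `ℚ`-span of `{ρ(g) - ρ(g⁻¹) | g ∈ G}` inside
`ℝ^{n×n}` contains an invertible matrix. -/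
theorem rat_span_skew_elements_contains_invertible
    {G : Type*} [Group G] [Finite G] {n : ℕ}
    (ρ : G →* GL (Fin n) ℝ)
    (habs : Submodule.span ℝ
      (Set.range fun g : G => (ρ g : Matrix (Fin n) (Fin n) ℝ)) = ⊤)
    (hn : Even n) :
    ∃ X ∈ Submodule.span ℚ (Set.range fun g : G =>
        (ρ g : Matrix (Fin n) (Fin n) ℝ) - (ρ g⁻¹ : Matrix (Fin n) (Fin n) ℝ)),
      IsUnit X.det := by
  classical
  cases nonempty_fintype G
  set A : G → Matrix (Fin n) (Fin n) ℝ := fun g => (ρ g : Matrix (Fin n) (Fin n) ℝ) with hAdef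
  have hA1 : A 1 = 1 := by simp [hAdef]
  have hAmul : ∀ g h : G, A (g * h) = A g * A h := by intro g h; simp [hAdef]
  have hAinv : ∀ g : G, A g * A g⁻¹ = 1 := fun g => by
    rw [← hAmul, mul_inv_cancel, hA1]
  set B : Matrix (Fin n) (Fin n) ℝ := ∑ g : G, (A g)ᴴ * A g with hBdef
  -- B is positive definite
  have hBsum : ∀ s : Finset G, (∑ g ∈ s, (A g)ᴴ * A g).PosSemidef := by
    intro s
    refine Finset.sum_induction _ _ (fun a b ha hb => ha.add hb) Matrix.PosSemidef.zero
      (fun g _ => posSemidef_conjTranspose_mul_self (A g))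
  have hB : B.PosDef := by
    have h1 : B = (A 1)ᴴ * A 1 + ∑ g ∈ Finset.univ.erase 1, (A g)ᴴ * A g :=
      (Finset.add_sum_erase _ _ (Finset.mem_univ 1)).symm
    rw [h1, hA1, conjTranspose_one, one_mul]
    exact Matrix.PosDef.one.add_posSemidef (hBsum _)
  have hBH : Bᴴ = B := hB.isHermitian
  have hBdet : IsUnit B.det := hB.det_pos.ne'.isUnit
  -- invariance
  have hinvar : ∀ h : G, (A h)ᴴ * B * A h = B := by
    intro h
    have h2 : (A h)ᴴ * B * A h = ∑ g : G, (A (g * h))ᴴ * A (g * h) := by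
      rw [hBdef, Finset.mul_sum, Finset.sum_mul]
      refine Finset.sum_congr rfl fun g _ => ?_
      rw [hAmul, conjTranspose_mul]
      noncomm_ring
    rw [h2]
    exact Fintype.sum_equiv (Equiv.mulRight h) _ _ (fun g => rfl)
  -- key relation
  have hkey : ∀ g : G, A g⁻¹ = B⁻¹ * (A g)ᴴ * B := by
    intro g
    have h1 : (A g)ᴴ * B = B * A g⁻¹ := by
      calc (A g)ᴴ * B = ((A g)ᴴ * B * A g) * A g⁻¹ := by
            rw [mul_assoc ((A g)ᴴ * B), hAinv, mul_one]
        _ = B * A g⁻¹ := by rw [hinvar]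
    rw [mul_assoc, h1, ← mul_assoc, Matrix.nonsing_inv_mul B hBdet, one_mul]
  -- the linear map M ↦ M - B⁻¹ Mᴴ B
  set T : Matrix (Fin n) (Fin n) ℝ →ₗ[ℝ] Matrix (Fin n) (Fin n) ℝ :=
    { toFun := fun M => M - B⁻¹ * Mᴴ * B
      map_add' := fun M N => by
        rw [conjTranspose_add, Matrix.mul_add, Matrix.add_mul]; abel
      map_smul' := fun c M => by
        simp only [conjTranspose_smul, RingHom.id_apply, star_trivial,
          Matrix.mul_smul, Matrix.smul_mul, smul_sub] } with hTdef
  have hTapp : ∀ M, T M = M - B⁻¹ * Mᴴ * B := fun M => rfl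
  -- the span of the skew elements contains the range of T
  have hspan : ∀ M : Matrix (Fin n) (Fin n) ℝ,
      T M ∈ Submodule.span ℝ (Set.range fun g : G => A g - A g⁻¹) := by
    intro M
    have hset : (Set.range fun g : G => A g - A g⁻¹) = T '' Set.range A := by
      rw [← Set.range_comp]
      refine congrArg Set.range (funext fun g => ?_)
      show A g - A g⁻¹ = T (A g)
      rw [hTapp, hkey g]
    rw [hset, ← Submodule.map_span, habs]
    exact ⟨M, trivial, rfl⟩
  -- the invertible skew element
  obtain ⟨m, hm⟩ := hn
  let e : Fin m ⊕ Fin m ≃ Fin n := finSumFinEquiv.trans (finCongr hm.symm)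
  set K : Matrix (Fin m ⊕ Fin m) (Fin m ⊕ Fin m) ℝ := Matrix.fromBlocks 0 1 (-1) 0 with hKdef
  set J : Matrix (Fin n) (Fin n) ℝ := Matrix.reindexAlgEquiv ℝ ℝ e K with hJdef
  have hXH : Kᴴ = -K := by
    rw [hKdef, fromBlocks_conjTranspose, Matrix.fromBlocks_neg]
    simp
  have hJH : Jᴴ = -J := by
    have h1 : Jᴴ = Matrix.reindexAlgEquiv ℝ ℝ e Kᴴ := conjTranspose_reindex e e K
    rw [h1, hXH, map_neg, ← hJdef]
  have hJJ : J * J = -1 := by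
    rw [hJdef, ← _root_.map_mul]
    have hKK : K * K = -1 := by
      rw [hKdef, Matrix.fromBlocks_multiply]
      rw [show (-1 : Matrix (Fin m ⊕ Fin m) (Fin m ⊕ Fin m) ℝ) =
        Matrix.fromBlocks (-(1 : Matrix (Fin m) (Fin m) ℝ)) (-0) (-0)
          (-(1 : Matrix (Fin m) (Fin m) ℝ)) by
          rw [← Matrix.fromBlocks_neg, Matrix.fromBlocks_one]]
      simp
    rw [hKK, map_neg, _root_.map_one]
  have hJdet : IsUnit J.det := by
    have : J.det * J.det = 1 := by
      rw [← det_mul, hJJ]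
      simp [Matrix.det_neg, hm, Even.neg_one_pow ⟨m, hm⟩]
    exact IsUnit.of_mul_eq_one _ this
  -- X₀ = T (B⁻¹ J) = 2 B⁻¹ J
  have hX0 : T (B⁻¹ * J) = (2 : ℝ) • (B⁻¹ * J) := by
    rw [hTapp, conjTranspose_mul, conjTranspose_nonsing_inv, hBH, hJH]
    simp only [Matrix.neg_mul, Matrix.mul_neg, neg_neg, sub_neg_eq_add, Matrix.mul_assoc]
    rw [Matrix.nonsing_inv_mul B hBdet, Matrix.mul_one, two_smul]
  have hX0det : IsUnit ((2 : ℝ) • (B⁻¹ * J)).det := by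
    rw [Matrix.det_smul, Matrix.det_mul, Matrix.det_nonsing_inv, Ring.inverse_eq_inv',
      Fintype.card_fin]
    exact ((isUnit_iff_ne_zero.mpr (two_ne_zero)).pow n).mul
      ((isUnit_iff_ne_zero.mpr (inv_ne_zero (isUnit_iff_ne_zero.mp hBdet))).mul hJdet)
  -- now use density
  have hX0mem : (2 : ℝ) • (B⁻¹ * J) ∈
      Submodule.span ℝ (Set.range fun g : G => A g - A g⁻¹) := hX0 ▸ hspan (B⁻¹ * J)
  have hclosure := real_span_subset_closure_rat_span
    (Set.range fun g : G => A g - A g⁻¹) hX0mem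
  have hopen : IsOpen {M : Matrix (Fin n) (Fin n) ℝ | IsUnit M.det} := by
    have : {M : Matrix (Fin n) (Fin n) ℝ | IsUnit M.det} =
        (fun M : Matrix (Fin n) (Fin n) ℝ => M.det) ⁻¹' ({0}ᶜ) := by
      ext M; simp [isUnit_iff_ne_zero]
    rw [this]
    exact (isOpen_compl_singleton).preimage (continuous_id.matrix_det)
  obtain ⟨Y, hY1, hY2⟩ := _root_.mem_closure_iff.mp hclosure _ hopen hX0det
  exact ⟨Y, hY2, hY1⟩
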